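/- Let n and t be integers with 2 ≤ t ≤ ⌊(n−1)/2⌋. Then the function P satisfies P'(x) < 0 for all x ∈ (0, (t−1)/(n−2)), and P''(x) ≥ 0 for all x ∈ [(t−1)/(n−2), 1). -/

import Mathlib

open Set Filter

private lemma chooseA (m j : ℕ) :
    (j + 1) * (m + 1).choose (j + 1) = (m + 1) * m.choose j :=
  (mul_comm _ _).trans (Nat.add_one_mul_choose_eq m j).symm

private lemma chooseB (m i : ℕ) :
    ((m + 1) - i) * (m + 1).choose i = (m + 1) * m.choose i := by
  rw [Nat.add_one_mul_choose_eq, Nat.choose_succ_right_eq]; ring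

/-- Derivative of the binomial tail sum. -/
private lemma gderiv (N t : ℕ) (ht : 1 ≤ t) (hN : 1 ≤ N) (htN : t ≤ N) (x : ℝ) :
    HasDerivAt
      (fun x : ℝ => ∑ i ∈ Finset.Icc t N, (N.choose i : ℝ) * x ^ i * (1 - x) ^ (N - i))
      (((N * (N - 1).choose (t - 1) : ℕ) : ℝ) * x ^ (t - 1) * (1 - x) ^ (N - t)) x := by
  set u : ℕ → ℝ := fun j => ((N * (N - 1).choose (j - 1) : ℕ) : ℝ) * x ^ (j - 1) * (1 - x) ^ (N - j)
    with hu
  have key : ∀ i ∈ Finset.Icc t N,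
      HasDerivAt (fun x : ℝ => (N.choose i : ℝ) * x ^ i * (1 - x) ^ (N - i))
        (u i - u (i + 1)) x := by
    intro i hi
    rw [Finset.mem_Icc] at hi
    have hi1 : 1 ≤ i := le_trans ht hi.1
    have h1 : HasDerivAt (fun x : ℝ => x ^ i) ((i : ℝ) * x ^ (i - 1)) x := hasDerivAt_pow i x
    have h2 : HasDerivAt (fun x : ℝ => (1 - x) ^ (N - i))
        (((N - i : ℕ) : ℝ) * (1 - x) ^ (N - i - 1) * (-1)) x :=
      (hasDerivAt_pow (N - i) (1 - x)).comp x ((hasDerivAt_id x).const_sub 1)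
    have h3 := (h1.mul h2).const_mul ((N.choose i : ℝ))
    have hfun : (fun x : ℝ => (N.choose i : ℝ) * x ^ i * (1 - x) ^ (N - i))
        = fun x : ℝ => (N.choose i : ℝ) * (x ^ i * (1 - x) ^ (N - i)) := by
      funext y; ring
    rw [hfun]
    refine h3.congr_deriv ?_
    have e1 : ((N * (N - 1).choose (i - 1) : ℕ) : ℝ) = (i : ℝ) * (N.choose i : ℝ) := by
      have := chooseA (N - 1) (i - 1)
      rw [show i - 1 + 1 = i by omega, show N - 1 + 1 = N by omega] at this
      exact_mod_cast this.symm
    have e2 : ((N * (N - 1).choose i : ℕ) : ℝ) = ((N - i : ℕ) : ℝ) * (N.choose i : ℝ) := by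
      have := chooseB (N - 1) i
      rw [show N - 1 + 1 = N by omega] at this
      exact_mod_cast this.symm
    simp only [hu]
    rw [show (i + 1) - 1 = i by omega, show N - (i + 1) = N - i - 1 by omega, e1, e2]
    ring
  have hsum := HasDerivAt.fun_sum key
  have htel : ∑ i ∈ Finset.Icc t N, (u i - u (i + 1)) = u t - u (N + 1) := by
    have h2 : ∑ i ∈ Finset.range (N + 1 - t), (u (t + i) - u (t + i + 1)) = u t - u (N + 1) := by
      have h3 := Finset.sum_range_sub' (fun k => u (t + k)) (N + 1 - t)
      rw [show t + (N + 1 - t) = N + 1 by omega] at h3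
      exact h3
    rw [← Finset.Ico_add_one_right_eq_Icc, Finset.sum_Ico_eq_sum_range]
    exact h2
  have huN : u (N + 1) = 0 := by
    simp only [hu, Nat.add_sub_cancel]
    rw [Nat.choose_eq_zero_of_lt (by omega : N - 1 < N)]
    simp
  rw [htel, huN, sub_zero] at hsum
  exact hsum

/-- **Lemma (P'x & P''x).** For integers `n, t` with `2 ≤ t ≤ ⌊(n−1)/2⌋`, with
`g(x) = Σ_{i=t}^{n−1} C(n−1,i) xⁱ (1−x)^{n−1−i}` and the trial entropy
`P(x) = 2∫₀ˣ g(z) dz − x·g(x)`, one has `P'(x) < 0` for all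
`x ∈ (0, (t−1)/(n−2))` and `P''(x) ≥ 0` for all `x ∈ [(t−1)/(n−2), 1)`. -/
theorem stmt_19
    (n t : ℕ) (ht : 2 ≤ t) (htn : t ≤ (n - 1) / 2)
    (g : ℝ → ℝ)
    (hg : ∀ x : ℝ, g x
        = ∑ i ∈ Finset.Icc t (n - 1), ((n - 1).choose i : ℝ) * x ^ i * (1 - x) ^ (n - 1 - i))
    (P : ℝ → ℝ)
    (hP : ∀ x : ℝ, P x = 2 * (∫ z in (0:ℝ)..x, g z) - x * g x) :
    (∀ x ∈ Set.Ioo (0:ℝ) (((t : ℝ) - 1) / ((n : ℝ) - 2)), deriv P x < 0)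
    ∧ (∀ x ∈ Set.Ico (((t : ℝ) - 1) / ((n : ℝ) - 2)) (1:ℝ), 0 ≤ deriv (deriv P) x) := by
  have h2t : t * 2 ≤ n - 1 := (Nat.le_div_iff_mul_le two_pos).mp htn
  have hn5 : 5 ≤ n := by omega
  -- constants
  set C : ℝ := (((n - 1) * (n - 1 - 1).choose (t - 1) : ℕ) : ℝ) with hC_def
  set u : ℝ → ℝ := fun x => C * x ^ (t - 1) * (1 - x) ^ (n - 1 - t) with hu_def
  set d : ℝ → ℝ :=
    fun x => C * x ^ (t - 2) * (1 - x) ^ (n - 1 - t - 1) * (((t : ℝ) - 1) - ((n : ℝ) - 2) * x)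
    with hd_def
  set m : ℝ := ((t : ℝ) - 1) / ((n : ℝ) - 2) with hm_def
  have hgfun : g = fun x : ℝ =>
      ∑ i ∈ Finset.Icc t (n - 1), ((n - 1).choose i : ℝ) * x ^ i * (1 - x) ^ (n - 1 - i) :=
    funext hg
  have hgd : ∀ x : ℝ, HasDerivAt g (u x) x := by
    intro x
    rw [hgfun]
    exact gderiv (n - 1) t (by omega) (by omega) (by omega) x
  have hgc : Continuous g := by
    have : Differentiable ℝ g := fun x => (hgd x).differentiableAt
    exact this.continuous
  -- casts
  have hct : ((t - 1 : ℕ) : ℝ) = (t : ℝ) - 1 := by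
    rw [Nat.cast_sub (by omega)]; norm_num
  have hcnt : ((n - 1 - t : ℕ) : ℝ) = (n : ℝ) - 1 - (t : ℝ) := by
    rw [show n - 1 - t = n - (1 + t) by omega, Nat.cast_sub (by omega)]
    push_cast; ring
  have hC_pos : 0 < C := by
    rw [hC_def]
    have h1 : 0 < (n - 1) * (n - 1 - 1).choose (t - 1) :=
      Nat.mul_pos (by omega) (Nat.choose_pos (by omega))
    exact_mod_cast h1
  have hn2 : (0 : ℝ) < (n : ℝ) - 2 := by
    have : (5 : ℝ) ≤ (n : ℝ) := by exact_mod_cast hn5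
    linarith
  have ht2 : (2 : ℝ) ≤ (t : ℝ) := by exact_mod_cast ht
  have hm_pos : 0 < m := div_pos (by linarith) hn2
  have hm_lt1 : m < 1 := by
    rw [hm_def, div_lt_one hn2]
    have : (t : ℝ) * 2 ≤ (n : ℝ) - 1 := by
      have : ((t * 2 : ℕ) : ℝ) ≤ ((n - 1 : ℕ) : ℝ) := by exact_mod_cast h2t
      rwa [Nat.cast_mul, Nat.cast_sub (by omega), Nat.cast_two, Nat.cast_one] at this
    linarith
  -- first derivative of P
  have hPd : ∀ x : ℝ, HasDerivAt P (g x - x * u x) x := by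
    intro x
    have hi : HasDerivAt (fun y : ℝ => ∫ z in (0:ℝ)..y, g z) (g x) x :=
      (hgc.integral_hasStrictDerivAt 0 x).hasDerivAt
    have h := (hi.const_mul (2 : ℝ)).sub ((hasDerivAt_id x).mul (hgd x))
    have hPfun : P = fun y : ℝ => 2 * (∫ z in (0:ℝ)..y, g z) - id y * g y := funext hP
    rw [hPfun]
    refine h.congr_deriv ?_
    simp [id]; ring
  have hφ : deriv P = fun x : ℝ => g x - x * u x := funext fun x => (hPd x).deriv
  -- derivative of u
  have hud : ∀ x : ℝ, HasDerivAt u (d x) x := by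
    intro x
    have h1 : HasDerivAt (fun x : ℝ => x ^ (t - 1)) (((t - 1 : ℕ) : ℝ) * x ^ (t - 1 - 1)) x :=
      hasDerivAt_pow (t - 1) x
    have h2 : HasDerivAt (fun x : ℝ => (1 - x) ^ (n - 1 - t))
        (((n - 1 - t : ℕ) : ℝ) * (1 - x) ^ (n - 1 - t - 1) * (-1)) x :=
      (hasDerivAt_pow (n - 1 - t) (1 - x)).comp x ((hasDerivAt_id x).const_sub 1)
    have h3 := (h1.mul h2).const_mul C
    have hufun : u = fun x : ℝ => C * (x ^ (t - 1) * (1 - x) ^ (n - 1 - t)) := by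
      funext y; rw [hu_def]; ring
    rw [hufun]
    refine h3.congr_deriv ?_
    rw [hd_def, hct, hcnt]
    rw [show t - 1 - 1 = t - 2 by omega,
      show t - 1 = (t - 2) + 1 by omega,
      show n - 1 - t = (n - 1 - t - 1) + 1 by omega]
    simp only [pow_succ, Nat.add_sub_cancel]
    ring
  -- second derivative of P
  have hφd : ∀ x : ℝ, HasDerivAt (fun x : ℝ => g x - x * u x) (-(x * d x)) x := by
    intro x
    have h := (hgd x).sub ((hasDerivAt_id x).mul (hud x))
    refine h.congr_deriv ?_
    simp only [id]
    ring
  have hPP : ∀ x : ℝ, deriv (deriv P) x = -(x * d x) := by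
    intro x
    rw [hφ]
    exact (hφd x).deriv
  constructor
  · -- P' < 0 on (0, m)
    intro x hx
    obtain ⟨hx0, hxm⟩ := hx
    have hg0 : g 0 = 0 := by
      rw [hg]
      apply Finset.sum_eq_zero
      intro i hi
      rw [Finset.mem_Icc] at hi
      rw [zero_pow (by omega : i ≠ 0)]
      ring
    have hanti : StrictAntiOn (fun x : ℝ => g x - x * u x) (Set.Icc 0 m) := by
      apply strictAntiOn_of_deriv_neg (convex_Icc 0 m)
      · apply Continuous.continuousOn
        have : Differentiable ℝ (fun x : ℝ => g x - x * u x) :=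
          fun x => (hφd x).differentiableAt
        exact this.continuous
      · intro y hy
        rw [interior_Icc] at hy
        obtain ⟨hy0, hym⟩ := hy
        rw [(hφd y).deriv]
        have hy1 : y < 1 := lt_trans hym hm_lt1
        have hbr : 0 < ((t : ℝ) - 1) - ((n : ℝ) - 2) * y := by
          have : y * ((n : ℝ) - 2) < (t : ℝ) - 1 := (lt_div_iff₀ hn2).mp hym
          linarith
        have hd_pos : 0 < d y := by
          rw [hd_def]
          apply mul_pos (mul_pos (mul_pos hC_pos (pow_pos hy0 _)) (pow_pos (by linarith) _)) hbr
        have : 0 < y * d y := mul_pos hy0 hd_pos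
        linarith
    have h1 : (fun x : ℝ => g x - x * u x) x < (fun x : ℝ => g x - x * u x) 0 :=
      hanti ⟨le_refl 0, le_of_lt hm_pos⟩ ⟨le_of_lt hx0, le_of_lt hxm⟩ hx0
    rw [hφ]
    simp only [hg0, mul_zero, zero_mul, sub_zero] at h1 ⊢
    simpa using h1
  · -- P'' ≥ 0 on [m, 1)
    intro x hx
    obtain ⟨hxm, hx1⟩ := hx
    rw [hPP]
    have hx0 : 0 < x := lt_of_lt_of_le hm_pos hxm
    have hbr : ((t : ℝ) - 1) - ((n : ℝ) - 2) * x ≤ 0 := by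
      have : (t : ℝ) - 1 ≤ x * ((n : ℝ) - 2) := (div_le_iff₀ hn2).mp hxm
      linarith
    have key : -(x * d x)
        = (x * (C * x ^ (t - 2) * (1 - x) ^ (n - 1 - t - 1)))
          * (((n : ℝ) - 2) * x - ((t : ℝ) - 1)) := by
      rw [hd_def]; ring
    rw [key]
    apply mul_nonneg
    · apply mul_nonneg hx0.le
      apply mul_nonneg (mul_nonneg hC_pos.le (pow_nonneg hx0.le _))
      exact pow_nonneg (by linarith) _
    · linarith
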